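/- Let (S_j)_{j=0}^{N-1} be a representation of the Cuntz algebra 𝒪_N on H, let (σ_i)_{i=0}^{N-1} be a complete and non-overlapping iterated function system on a compact metric space X, let f ∈ H, and fix i ∈ {0,…,N−1}. If μ is a spectral measure of f and ν is a spectral measure of S_i f, then ν equals the pushforward μ ∘ σ_i^{−1} of μ under σ_i. -/

import Mathlib

open MeasureTheory ContinuousLinearMap
open scoped InnerProductSpace

variable {H : Type*} [NormedAddCommGroup H] [InnerProductSpace ℂ H] [CompleteSpace H]
variable {X : Type*} [MetricSpace X] [CompactSpace X] [MeasurableSpace X] [BorelSpace X]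

/-- The word operator `S_α = S_{α 1} ⋯ S_{α k}` associated to a multi-index
`α ∈ {0,…,N-1}^k`. -/
noncomputable def Sw {N : ℕ} (S : Fin N → H →L[ℂ] H) {k : ℕ} (α : Fin k → Fin N) :
    H →L[ℂ] H :=
  (List.ofFn fun i => S (α i)).prod

/-- A family `S_0, …, S_{N-1}` of bounded operators is a representation of the Cuntz
algebra `𝒪_N` if `S_j^* S_k = δ_{jk} I` and `∑ j, S_j S_j^* = I`. -/
def CuntzRep {N : ℕ} (S : Fin N → H →L[ℂ] H) : Prop :=
  (∀ j k : Fin N, adjoint (S j) ∘L S k = if j = k then 1 else 0) ∧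
    ∑ j : Fin N, S j ∘L adjoint (S j) = 1

/-- The composition `σ_{i_1} ∘ ⋯ ∘ σ_{i_k}` for a multi-index `i`. -/
def compIFS {N : ℕ} (σ : Fin N → X → X) {k : ℕ} (i : Fin k → Fin N) : X → X :=
  (List.ofFn fun j => σ (i j)).foldr (· ∘ ·) id

/-- `A_k(i) = σ_{i_1} ∘ ⋯ ∘ σ_{i_k}(X)`. -/
def Ak {N : ℕ} (σ : Fin N → X → X) {k : ℕ} (i : Fin k → Fin N) : Set X :=
  Set.range (compIFS σ i)

/-- The IFS is complete if the diameters of `A_k(i_1,…,i_k)` tend to `0` along every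
infinite word `(i_1, i_2, …)`. -/
def CompleteIFS {N : ℕ} (σ : Fin N → X → X) : Prop :=
  ∀ s : ℕ → Fin N,
    Filter.Tendsto (fun k : ℕ => Metric.diam (Ak σ fun j : Fin k => s j))
      Filter.atTop (nhds 0)

/-- The IFS is non-overlapping if for each `k` the sets `A_k(i)` are pairwise disjoint. -/
def NonOverlapping {N : ℕ} (σ : Fin N → X → X) : Prop :=
  ∀ k : ℕ, ∀ i i' : Fin k → Fin N, i ≠ i' → Disjoint (Ak σ i) (Ak σ i')

/-- A Borel measure `μ` on `X` is a spectral measure of `g` if `μ(X) = ‖g‖²`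
and `μ(A_k(i)) = ‖S_i^* g‖²` for every `k ≥ 1` and multi-index `i`. -/
def IsSpectralMeasureX {N : ℕ} (S : Fin N → H →L[ℂ] H) (σ : Fin N → X → X) (g : H)
    (μ : Measure X) : Prop :=
  μ Set.univ = ENNReal.ofReal (‖g‖ ^ 2) ∧
    ∀ k : ℕ, 1 ≤ k → ∀ i : Fin k → Fin N,
      μ (Ak σ i) = ENNReal.ofReal (‖adjoint (Sw S i) g‖ ^ 2)

namespace Stmt13Aux

set_option linter.unusedSectionVars false

/-! ### List versions of the word operators and word sets -/

noncomputable def SwL {N : ℕ} (S : Fin N → H →L[ℂ] H) (l : List (Fin N)) : H →L[ℂ] H :=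
  (l.map S).prod

def compL {N : ℕ} (σ : Fin N → X → X) (l : List (Fin N)) : X → X :=
  (l.map σ).foldr (· ∘ ·) id

def AkL {N : ℕ} (σ : Fin N → X → X) (l : List (Fin N)) : Set X := Set.range (compL σ l)

variable {N : ℕ} {S : Fin N → H →L[ℂ] H} {σ : Fin N → X → X}

theorem Sw_eq_SwL {k : ℕ} (w : Fin k → Fin N) : Sw S w = SwL S (List.ofFn w) := by
  simp [Sw, SwL, List.map_ofFn]; rfl

theorem compIFS_eq_compL {k : ℕ} (w : Fin k → Fin N) :
    compIFS σ w = compL σ (List.ofFn w) := by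
  simp [compIFS, compL, List.map_ofFn]; rfl

theorem Ak_eq_AkL {k : ℕ} (w : Fin k → Fin N) : Ak σ w = AkL σ (List.ofFn w) := by
  simp [Ak, AkL, compIFS_eq_compL]

theorem ofFn_get_cast {l : List (Fin N)} {m : ℕ} (h : l.length = m) :
    List.ofFn (fun j : Fin m => l.get (Fin.cast h.symm j)) = l := by
  subst h; simpa using List.ofFn_get l

@[simp] theorem SwL_nil : SwL S [] = 1 := rfl

theorem SwL_cons (a : Fin N) (t : List (Fin N)) : SwL S (a :: t) = S a ∘L SwL S t := by
  simp [SwL]; rfl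

@[simp] theorem compL_nil : compL σ [] = _root_.id := rfl

theorem compL_cons (a : Fin N) (t : List (Fin N)) :
    compL σ (a :: t) = σ a ∘ compL σ t := rfl

theorem compL_append (l l' : List (Fin N)) :
    compL σ (l ++ l') = compL σ l ∘ compL σ l' := by
  induction l with
  | nil => rfl
  | cons a t ih => simp [compL_cons, ih, Function.comp_assoc]

@[simp] theorem AkL_nil : AkL σ ([] : List (Fin N)) = Set.univ := by
  rw [AkL, compL_nil, Set.range_id]

theorem AkL_cons (a : Fin N) (t : List (Fin N)) : AkL σ (a :: t) = σ a '' AkL σ t := by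
  simp [AkL, compL_cons, Set.range_comp]

theorem AkL_append_subset (l l' : List (Fin N)) : AkL σ (l ++ l') ⊆ AkL σ l := by
  rw [AkL, AkL, compL_append]
  exact Set.range_comp_subset_range _ _

theorem continuous_compL (hcont : ∀ i, Continuous (σ i)) (l : List (Fin N)) :
    Continuous (compL σ l) := by
  induction l with
  | nil => exact continuous_id
  | cons a t ih => rw [compL_cons]; exact (hcont a).comp ih

theorem isCompact_AkL (hcont : ∀ i, Continuous (σ i)) (l : List (Fin N)) :
    IsCompact (AkL σ l) :=
  isCompact_range (continuous_compL hcont l)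

theorem measurableSet_AkL (hcont : ∀ i, Continuous (σ i)) (l : List (Fin N)) :
    MeasurableSet (AkL σ l) :=
  (isCompact_AkL hcont l).isClosed.measurableSet

theorem AkL_disjoint (hno : NonOverlapping σ) {l l' : List (Fin N)}
    (hlen : l.length = l'.length) (hne : l ≠ l') :
    Disjoint (AkL σ l) (AkL σ l') := by
  set m := l.length with hm
  have h1 : List.ofFn (fun j : Fin m => l.get (Fin.cast rfl j)) = l := ofFn_get_cast rfl
  have h2 : List.ofFn (fun j : Fin m => l'.get (Fin.cast hlen j)) = l' :=
    ofFn_get_cast hlen.symm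
  have hw : (fun j : Fin m => l.get (Fin.cast rfl j)) ≠
      (fun j : Fin m => l'.get (Fin.cast hlen j)) := by
    intro h; apply hne; rw [← h1, ← h2, h]
  have := hno m _ _ hw
  rwa [Ak_eq_AkL, Ak_eq_AkL, h1, h2] at this

theorem ofFn_cons (a : Fin N) {m : ℕ} (w : Fin m → Fin N) :
    List.ofFn (Fin.cons a w) = a :: List.ofFn w := by
  simp [List.ofFn_succ]

/-! ### Hilbert space lemmas -/

theorem Sw_cons (a : Fin N) {m : ℕ} (w : Fin m → Fin N) :
    Sw S (Fin.cons a w) = S a ∘L Sw S w := by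
  simp only [Sw, List.ofFn_succ, Fin.cons_succ, Fin.cons_zero, List.prod_cons]
  rfl

theorem adjoint_one' : adjoint (1 : H →L[ℂ] H) = 1 := by
  simpa [ContinuousLinearMap.one_def] using
    (ContinuousLinearMap.adjoint_id (𝕜 := ℂ) (E := H))

theorem adjoint_apply_S (hS1 : ∀ j k : Fin N, adjoint (S j) ∘L S k = if j = k then 1 else 0)
    (a b : Fin N) (g : H) : adjoint (S a) (S b g) = if a = b then g else 0 := by
  have := congrArg (fun T : H →L[ℂ] H => T g) (hS1 a b)
  simpa [apply_ite (fun T : H →L[ℂ] H => T g)] using this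

theorem norm_S_apply (hS1 : ∀ j k : Fin N, adjoint (S j) ∘L S k = if j = k then 1 else 0)
    (a : Fin N) (g : H) : ‖S a g‖ = ‖g‖ := by
  have h : adjoint (S a) (S a g) = g := by simpa using adjoint_apply_S hS1 a a g
  have h2 : ‖S a g‖ ^ 2 = ‖g‖ ^ 2 := by
    rw [← inner_self_eq_norm_sq (𝕜 := ℂ), ← adjoint_inner_left, h,
      inner_self_eq_norm_sq]
  nlinarith [norm_nonneg (S a g), norm_nonneg g]

theorem sum_norm_adjoint_sq (hS2 : ∑ j : Fin N, S j ∘L adjoint (S j) = 1) (g : H) :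
    ∑ j : Fin N, ‖adjoint (S j) g‖ ^ 2 = ‖g‖ ^ 2 := by
  have key : ∑ j : Fin N, S j (adjoint (S j) g) = g := by
    have := congrArg (fun T : H →L[ℂ] H => T g) hS2
    simpa using this
  calc ∑ j : Fin N, ‖adjoint (S j) g‖ ^ 2
      = ∑ j : Fin N, RCLike.re (⟪g, S j (adjoint (S j) g)⟫_ℂ) := by
        refine Finset.sum_congr rfl fun j _ => ?_
        rw [← adjoint_inner_left, inner_self_eq_norm_sq]
    _ = RCLike.re (⟪g, ∑ j : Fin N, S j (adjoint (S j) g)⟫_ℂ) := by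
        rw [inner_sum, map_sum]
    _ = ‖g‖ ^ 2 := by rw [key, inner_self_eq_norm_sq]

theorem sum_norm_Sw_sq (hS2 : ∑ j : Fin N, S j ∘L adjoint (S j) = 1) (m : ℕ) (g : H) :
    ∑ w : Fin m → Fin N, ‖adjoint (Sw S w) g‖ ^ 2 = ‖g‖ ^ 2 := by
  induction m generalizing g with
  | zero =>
    rw [Fintype.sum_unique]
    have : (Sw S (default : Fin 0 → Fin N) : H →L[ℂ] H) = 1 := by
      simp [Sw]
    rw [this, adjoint_one', one_apply_eq_self]
  | succ m ih =>
    rw [← Fintype.sum_equiv (Fin.consEquiv (fun _ : Fin (m+1) => Fin N))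
      (fun p : Fin N × (Fin m → Fin N) => ‖adjoint (Sw S (Fin.cons p.1 p.2)) g‖ ^ 2)
      (fun w : Fin (m+1) → Fin N => ‖adjoint (Sw S w) g‖ ^ 2)
      (fun p => rfl)]
    rw [Fintype.sum_prod_type]
    calc ∑ a : Fin N, ∑ w : Fin m → Fin N, ‖adjoint (Sw S (Fin.cons a w)) g‖ ^ 2
        = ∑ a : Fin N, ‖adjoint (S a) g‖ ^ 2 := by
          refine Finset.sum_congr rfl fun a _ => ?_
          rw [← ih (adjoint (S a) g)]
          refine Finset.sum_congr rfl fun w _ => ?_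
          rw [Sw_cons, adjoint_comp]; rfl
      _ = ‖g‖ ^ 2 := sum_norm_adjoint_sq hS2 g

/-! ### Spectral measures on word sets -/

theorem spectral_AkL {g : H} {ρ : Measure X} (hg : IsSpectralMeasureX S σ g ρ)
    (l : List (Fin N)) :
    ρ (AkL σ l) = ENNReal.ofReal (‖adjoint (SwL S l) g‖ ^ 2) := by
  cases l with
  | nil => rw [AkL_nil, SwL_nil, adjoint_one', one_apply_eq_self]; exact hg.1
  | cons a t =>
    have h1 : 1 ≤ (a :: t).length := by simp
    have := hg.2 (a :: t).length h1 (fun j => (a :: t).get j)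
    rwa [Ak_eq_AkL, Sw_eq_SwL, List.ofFn_get] at this

def Km (σ : Fin N → X → X) (m : ℕ) : Set X := ⋃ w : Fin m → Fin N, Ak σ w

theorem measurableSet_Km (hcont : ∀ i, Continuous (σ i)) (m : ℕ) :
    MeasurableSet (Km σ m) :=
  MeasurableSet.iUnion fun w => by rw [Ak_eq_AkL]; exact measurableSet_AkL hcont _

theorem Km_zero : Km σ 0 = Set.univ := by
  refine Set.eq_univ_of_univ_subset fun x _ => ?_
  exact Set.mem_iUnion.2 ⟨default, by rw [Ak_eq_AkL]; simp⟩

theorem Km_succ_subset (m : ℕ) : Km σ (m + 1) ⊆ Km σ m := by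
  rintro x hx
  obtain ⟨w, hw⟩ := Set.mem_iUnion.mp hx
  refine Set.mem_iUnion.2 ⟨fun j => w j.castSucc, ?_⟩
  rw [Ak_eq_AkL] at hw ⊢
  have hl : List.ofFn w = List.ofFn (fun j : Fin m => w j.castSucc) ++ [w (Fin.last m)] := by
    rw [List.ofFn_succ' w, List.concat_eq_append]
  rw [hl] at hw
  exact AkL_append_subset _ _ hw

theorem measure_Km (hS2 : ∑ j : Fin N, S j ∘L adjoint (S j) = 1)
    (hcont : ∀ i, Continuous (σ i)) (hno : NonOverlapping σ)
    {g : H} {ρ : Measure X} (hg : IsSpectralMeasureX S σ g ρ) (m : ℕ) :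
    ρ (Km σ m) = ρ Set.univ := by
  cases m with
  | zero => rw [Km_zero]
  | succ m =>
    rw [Km, measure_iUnion (fun w w' hne => hno _ w w' hne)
      (fun w => by rw [Ak_eq_AkL]; exact measurableSet_AkL hcont _), tsum_fintype]
    calc ∑ w : Fin (m+1) → Fin N, ρ (Ak σ w)
        = ∑ w : Fin (m+1) → Fin N, ENNReal.ofReal (‖adjoint (Sw S w) g‖ ^ 2) :=
          Finset.sum_congr rfl fun w _ => hg.2 (m+1) (by omega) w
      _ = ENNReal.ofReal (∑ w : Fin (m+1) → Fin N, ‖adjoint (Sw S w) g‖ ^ 2) := by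
          rw [ENNReal.ofReal_sum_of_nonneg (fun w _ => by positivity)]
      _ = ρ Set.univ := by rw [sum_norm_Sw_sq hS2, hg.1]

theorem compl_Km_null (hS2 : ∑ j : Fin N, S j ∘L adjoint (S j) = 1)
    (hcont : ∀ i, Continuous (σ i)) (hno : NonOverlapping σ)
    {g : H} {ρ : Measure X} (hg : IsSpectralMeasureX S σ g ρ) (m : ℕ) :
    ρ (Km σ m)ᶜ = 0 := by
  have hne : ρ (Km σ m) ≠ ⊤ := by
    rw [measure_Km hS2 hcont hno hg, hg.1]; exact ENNReal.ofReal_ne_top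
  rw [measure_compl (measurableSet_Km hcont m) hne, measure_Km hS2 hcont hno hg,
    tsub_self]

/-! ### Uniform diameter decay -/

theorem uniform_diam (hN : 2 ≤ N) (hcont : ∀ i, Continuous (σ i))
    (hcomp : CompleteIFS σ) {ε : ℝ} (hε : 0 < ε) :
    ∃ m : ℕ, 1 ≤ m ∧ ∀ w : Fin m → Fin N, Metric.diam (Ak σ w) < ε := by
  by_contra hcon
  push_neg at hcon
  have h : ∀ m : ℕ, ∃ w : Fin (m+1) → Fin N, ε ≤ Metric.diam (Ak σ w) := by
    intro m
    obtain ⟨w, hw⟩ := hcon (m+1) (by omega)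
    exact ⟨w, hw⟩
  set C : ℕ → Set (ℕ → Fin N) :=
    fun m => {s | ε ≤ Metric.diam (Ak σ (fun j : Fin (m+1) => s j))} with hC
  have hdec : ∀ m, C (m+1) ⊆ C m := by
    intro m s hs
    have hsub : Ak σ (fun j : Fin (m+2) => s j) ⊆ Ak σ (fun j : Fin (m+1) => s j) := by
      rw [Ak_eq_AkL, Ak_eq_AkL]
      have hl : List.ofFn (fun j : Fin (m+2) => s j) =
          List.ofFn (fun j : Fin (m+1) => s j) ++ [s (m+1)] := by
        rw [List.ofFn_succ' (fun j : Fin (m+2) => s j), List.concat_eq_append]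
        simp [Fin.coe_castSucc, Fin.val_last]
      rw [hl]
      exact AkL_append_subset _ _
    have hb : Bornology.IsBounded (Ak σ (fun j : Fin (m+1) => s j)) := by
      rw [Ak_eq_AkL]; exact (isCompact_AkL hcont _).isBounded
    exact le_trans hs (Metric.diam_mono hsub hb)
  have hne : ∀ m, (C m).Nonempty := by
    intro m
    obtain ⟨w, hw⟩ := h m
    have h0N : 0 < N := by omega
    refine ⟨fun k => if hk : k < m + 1 then w ⟨k, hk⟩ else w ⟨0, by omega⟩, ?_⟩
    have : (fun j : Fin (m+1) => (fun k => if hk : k < m + 1 then w ⟨k, hk⟩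
        else w ⟨0, by omega⟩) (j : ℕ)) = w := by
      funext j
      simp [j.isLt]
    exact (congrArg (fun v : Fin (m+1) → Fin N => ε ≤ Metric.diam (Ak σ v)) this).mpr hw
  have hclosed : ∀ m, IsClosed (C m) := by
    intro m
    have hgc : Continuous (fun s : ℕ → Fin N => (fun j : Fin (m+1) => s j)) :=
      continuous_pi fun j => continuous_apply (j : ℕ)
    have : C m = (fun s : ℕ → Fin N => (fun j : Fin (m+1) => s j)) ⁻¹'
        {w : Fin (m+1) → Fin N | ε ≤ Metric.diam (Ak σ w)} := rfl
    rw [this]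
    exact (isClosed_discrete _).preimage hgc
  obtain ⟨s, hs⟩ := IsCompact.nonempty_iInter_of_sequence_nonempty_isCompact_isClosed
    C hdec hne ((hclosed 0).isCompact) hclosed
  have hsall : ∀ m, ε ≤ Metric.diam (Ak σ (fun j : Fin (m+1) => s j)) := by
    intro m
    exact Set.mem_iInter.mp hs m
  obtain ⟨K, hK⟩ := Filter.eventually_atTop.mp ((hcomp s).eventually (gt_mem_nhds hε))
  have h1 := hK (K+1) (by omega)
  have h2 := hsall K
  linarith

/-! ### Agreement on word sets -/

theorem agree_on_words
    (hS1 : ∀ j k : Fin N, adjoint (S j) ∘L S k = if j = k then 1 else 0)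
    (hS2 : ∑ j : Fin N, S j ∘L adjoint (S j) = 1)
    (hcont : ∀ i, Continuous (σ i)) (hno : NonOverlapping σ)
    {f : H} {i : Fin N} {μ ν : Measure X}
    (hμ : IsSpectralMeasureX S σ f μ) (hν : IsSpectralMeasureX S σ (S i f) ν)
    {m : ℕ} (hm : 1 ≤ m) (w : Fin m → Fin N) :
    ν (Ak σ w) = Measure.map (σ i) μ (Ak σ w) := by
  obtain ⟨m, rfl⟩ : ∃ m', m = m' + 1 := ⟨m - 1, by omega⟩
  obtain ⟨a, t, hlw⟩ : ∃ a t, List.ofFn w = a :: t := ⟨_, _, List.ofFn_succ (f := w)⟩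
  have htlen : t.length = m := by
    have := congrArg List.length hlw
    simp at this
    omega
  -- the ν side
  have hνval : ν (Ak σ w) =
      if a = i then ENNReal.ofReal (‖adjoint (SwL S t) f‖ ^ 2) else 0 := by
    rw [Ak_eq_AkL, hlw, spectral_AkL hν, SwL_cons, adjoint_comp, comp_apply,
      adjoint_apply_S hS1 a i f]
    split_ifs with h
    · rfl
    · simp
  -- the μ' side
  have hmeasσ : Measurable (σ i) := (hcont i).measurable
  have hAmeas : MeasurableSet (AkL σ (a :: t)) := measurableSet_AkL hcont _
  have hconull : μ (Km σ m)ᶜ = 0 := compl_Km_null hS2 hcont hno hμ m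
  have hset : σ i ⁻¹' AkL σ (a :: t) ∩ Km σ m = if a = i then AkL σ t else ∅ := by
    ext x
    constructor
    · rintro ⟨hx1, hx2⟩
      obtain ⟨w', hx2⟩ := Set.mem_iUnion.mp hx2
      rw [Ak_eq_AkL] at hx2
      have h3 : σ i x ∈ AkL σ (i :: List.ofFn w') := by
        rw [AkL_cons]; exact ⟨x, hx2, rfl⟩
      by_cases hca : (i :: List.ofFn w' : List (Fin N)) = a :: t
      · obtain ⟨h4, h5⟩ : i = a ∧ List.ofFn w' = t := by
          refine ⟨?_, ?_⟩ <;> injection hca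
        rw [if_pos h4.symm]
        rw [← h5]
        exact hx2
      · have hlen : (i :: List.ofFn w' : List (Fin N)).length = (a :: t).length := by
          simp [htlen]
        have hd := AkL_disjoint hno hlen hca
        exact absurd (Set.mem_preimage.mp hx1) (Set.disjoint_left.mp hd h3)
    · intro hx
      by_cases h : a = i
      · rw [if_pos h] at hx
        refine ⟨?_, ?_⟩
        · rw [Set.mem_preimage, AkL_cons, h]
          exact ⟨x, hx, rfl⟩
        · refine Set.mem_iUnion.2 ⟨fun j : Fin m => t.get (Fin.cast htlen.symm j), ?_⟩
          rw [Ak_eq_AkL, ofFn_get_cast htlen]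
          exact hx
      · rw [if_neg h] at hx
        exact absurd hx (Set.notMem_empty x)
  rw [hνval, Ak_eq_AkL, hlw, Measure.map_apply hmeasσ hAmeas,
    ← measure_inter_conull (s := σ i ⁻¹' AkL σ (a :: t)) hconull, hset]
  split_ifs with h
  · exact (spectral_AkL hμ t).symm
  · simp

end Stmt13Aux

open Stmt13Aux

/-- If `μ` is a spectral measure of `f` and `ν` is a spectral measure of `S_i f`, then
`ν = μ ∘ σ_i⁻¹`, the pushforward of `μ` under `σ_i`. -/
theorem stmt_13 {N : ℕ} (hN : 2 ≤ N) (S : Fin N → H →L[ℂ] H) (hS : CuntzRep S)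
    (σ : Fin N → X → X) (hcont : ∀ i, Continuous (σ i))
    (hcomp : CompleteIFS σ) (hno : NonOverlapping σ)
    (f : H) (i : Fin N)
    (μ : Measure X) (hμ : IsSpectralMeasureX S σ f μ)
    (ν : Measure X) (hν : IsSpectralMeasureX S σ (S i f) ν) :
    ν = Measure.map (σ i) μ := by
  classical
  obtain ⟨hS1, hS2⟩ := hS
  set μ' := Measure.map (σ i) μ with hμ'def
  have hmeasσ : Measurable (σ i) := (hcont i).measurable
  -- total masses agree
  have huniv : ν Set.univ = μ' Set.univ := by
    rw [hν.1, norm_S_apply hS1, hμ'def, Measure.map_apply hmeasσ MeasurableSet.univ,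
      Set.preimage_univ, hμ.1]
  -- finiteness
  haveI hfinν : IsFiniteMeasure ν := ⟨by rw [hν.1]; exact ENNReal.ofReal_lt_top⟩
  haveI hfinμ' : IsFiniteMeasure μ' := by
    constructor
    rw [hμ'def, Measure.map_apply hmeasσ MeasurableSet.univ, Set.preimage_univ, hμ.1]
    exact ENNReal.ofReal_lt_top
  -- ν is concentrated on each Km
  have hνnull : ∀ m, ν (Km σ m)ᶜ = 0 := fun m => compl_Km_null hS2 hcont hno hν m
  -- μ' is concentrated on each Km
  have hμ'null : ∀ m, μ' (Km σ m)ᶜ = 0 := by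
    intro m
    have hle : μ' Set.univ ≤ μ' (Km σ m) := by
      cases m with
      | zero => rw [Km_zero]
      | succ m =>
        have hsub : Km σ m ⊆ σ i ⁻¹' Km σ (m+1) := by
          rintro x hx
          obtain ⟨w, hw⟩ := Set.mem_iUnion.mp hx
          refine Set.mem_preimage.mpr (Set.mem_iUnion.2 ⟨Fin.cons i w, ?_⟩)
          rw [Ak_eq_AkL, ofFn_cons, AkL_cons]
          rw [Ak_eq_AkL] at hw
          exact ⟨x, hw, rfl⟩
        calc μ' Set.univ = μ Set.univ := by
              rw [hμ'def, Measure.map_apply hmeasσ MeasurableSet.univ, Set.preimage_univ]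
          _ = μ (Km σ m) := (measure_Km hS2 hcont hno hμ m).symm
          _ ≤ μ (σ i ⁻¹' Km σ (m+1)) := measure_mono hsub
          _ = μ' (Km σ (m+1)) := by
              rw [hμ'def, Measure.map_apply hmeasσ (measurableSet_Km hcont _)]
    have heq : μ' (Km σ m) = μ' Set.univ :=
      le_antisymm (measure_mono (Set.subset_univ _)) hle
    rw [measure_compl (measurableSet_Km hcont m) (measure_ne_top _ _), heq, tsub_self]
  -- agreement on open sets
  have hopen : ∀ U : Set X, IsOpen U → ν U = μ' U := by
    intro U hU
    by_cases hUc : Uᶜ = ∅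
    · have hUuniv : U = Set.univ := by
        rwa [Set.compl_empty_iff] at hUc
      rw [hUuniv]; exact huniv
    · have hUcne : Uᶜ.Nonempty := Set.nonempty_iff_ne_empty.mpr hUc
      set E : ℕ → Set X := fun n => {x | 1 / ((n : ℝ) + 1) ≤ Metric.infDist x Uᶜ}
        with hE
      have hEsubU : ∀ n, E n ⊆ U := by
        intro n x hx
        by_contra hxU
        have h0 : Metric.infDist x Uᶜ = 0 := Metric.infDist_zero_of_mem hxU
        rw [hE, Set.mem_setOf_eq, h0] at hx
        have hpos : (0 : ℝ) < 1 / ((n : ℝ) + 1) := by positivity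
        linarith
      have hboth : ∀ n : ℕ, ν (E n) ≤ μ' U ∧ μ' (E n) ≤ ν U := by
        intro n
        have hδ : (0 : ℝ) < 1 / ((n : ℝ) + 1) := by positivity
        obtain ⟨m, hm1, hdiam⟩ := uniform_diam hN hcont hcomp hδ
        set D : Finset (Fin m → Fin N) := Finset.univ.filter (fun w => Ak σ w ⊆ U)
          with hD
        set W : Set X := ⋃ w ∈ D, Ak σ w with hW
        have hWU : W ⊆ U := Set.iUnion₂_subset fun w hw => (Finset.mem_filter.mp hw).2
        have hWmeas : ∀ w ∈ D, MeasurableSet (Ak σ w) := fun w _ => by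
          rw [Ak_eq_AkL]; exact measurableSet_AkL hcont _
        have hdisj : (D : Set (Fin m → Fin N)).PairwiseDisjoint (fun w => Ak σ w) :=
          fun w _ w' _ hne => hno m w w' hne
        have hEW : E n ∩ Km σ m ⊆ W := by
          rintro x ⟨hx1, hx2⟩
          obtain ⟨w, hw⟩ := Set.mem_iUnion.mp hx2
          have hb : Bornology.IsBounded (Ak σ w) := by
            rw [Ak_eq_AkL]; exact (isCompact_AkL hcont _).isBounded
          have hsub : Ak σ w ⊆ U := by
            intro y hy
            by_contra hyU
            have h1 : Metric.infDist x Uᶜ ≤ dist x y :=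
              Metric.infDist_le_dist_of_mem hyU
            have h2 : dist y x ≤ Metric.diam (Ak σ w) :=
              Metric.dist_le_diam_of_mem hb hy hw
            have hx1' : 1 / ((n : ℝ) + 1) ≤ Metric.infDist x Uᶜ := hx1
            rw [dist_comm] at h1
            linarith [hdiam w]
          exact Set.mem_biUnion (Finset.mem_filter.mpr ⟨Finset.mem_univ _, hsub⟩) hw
        have hsum : ν W = μ' W := by
          rw [hW, measure_biUnion_finset hdisj hWmeas,
            measure_biUnion_finset hdisj hWmeas]
          exact Finset.sum_congr rfl fun w _ =>
            agree_on_words hS1 hS2 hcont hno hμ hν hm1 w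
        constructor
        · calc ν (E n) = ν (E n ∩ Km σ m) := (measure_inter_conull (hνnull m)).symm
            _ ≤ ν W := measure_mono hEW
            _ = μ' W := hsum
            _ ≤ μ' U := measure_mono hWU
        · calc μ' (E n) = μ' (E n ∩ Km σ m) := (measure_inter_conull (hμ'null m)).symm
            _ ≤ μ' W := measure_mono hEW
            _ = ν W := hsum.symm
            _ ≤ ν U := measure_mono hWU
      have hEmono : Monotone E := by
        intro n n' hnn x hx
        have : 1 / ((n' : ℝ) + 1) ≤ 1 / ((n : ℝ) + 1) := by
          apply one_div_le_one_div_of_le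
          · positivity
          · have : (n : ℝ) ≤ (n' : ℝ) := Nat.cast_le.mpr hnn
            linarith
        exact le_trans this hx
      have hEU : ⋃ n, E n = U := by
        apply Set.Subset.antisymm
        · exact Set.iUnion_subset hEsubU
        · intro x hx
          have hxc : x ∉ Uᶜ := fun h => h hx
          have h0 : 0 < Metric.infDist x Uᶜ :=
            (IsClosed.notMem_iff_infDist_pos hU.isClosed_compl hUcne).mp hxc
          obtain ⟨n, hn⟩ := exists_nat_one_div_lt h0
          exact Set.mem_iUnion.2 ⟨n, le_of_lt hn⟩
      have hνU : ν U = ⨆ n, ν (E n) := by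
        rw [← hEU]; exact hEmono.measure_iUnion
      have hμ'U : μ' U = ⨆ n, μ' (E n) := by
        rw [← hEU]; exact hEmono.measure_iUnion
      apply le_antisymm
      · rw [hνU]; exact iSup_le fun n => (hboth n).1
      · rw [hμ'U]; exact iSup_le fun n => (hboth n).2
  -- conclude by the π-system argument for open sets
  have hborel : (inferInstance : MeasurableSpace X) =
      MeasurableSpace.generateFrom {s : Set X | IsOpen s} := by
    rw [BorelSpace.measurable_eq (α := X)]; rfl
  exact MeasureTheory.ext_of_generate_finite _ hborel isPiSystem_isOpen
    (fun s hs => hopen s hs) huniv
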